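/- Let Z be a finite set, p : Z → ℝ with p_z ≥ 0 and Σ_z p_z = 1, and let (ρ^Q_z)_{z∈Z} and (ρ^C_z)_{z∈Z} be families of d×d density matrices. On the space of complex d×d matrices with the Hilbert–Schmidt inner product ⟨A,B⟩ = Tr[A†B], define η^{CC}(X) = Σ_z p_z ρ^C_z · Tr[ρ^C_z X] and η^{QC}(X) = Σ_z p_z ρ^Q_z · Tr[ρ^C_z X], and let ζ be any linear map on d×d matrices satisfying η^{CC} ∘ ζ = (η^{QC})†. Then for every linear map 𝒩 on d×d matrices that is self-adjoint and positive semidefinite with respect to the Hilbert–Schmidt inner product, one has Σ_z p_z ⟨ρ^Q_z, 𝒩(ρ^Q_z)⟩ ≤ ‖𝒩‖_∞ (1 − STr[η^{QC} ∘ ζ]) + STr[𝒩 ∘ η^{QC} ∘ ζ], where ‖𝒩‖_∞ is the operator norm of 𝒩 with respect to the Hilbert–Schmidt norm and STr denotes the trace of a superoperator. -/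

import Mathlib

open Matrix ComplexOrder

section QHelpers

variable {d : ℕ}

private lemma qhelper_double_ite_sum (i j : Fin d) (f : Fin d → Fin d → ℂ) :
    (∑ x : Fin d, ∑ y : Fin d, if i = x ∧ j = y then f x y else 0) = f i j := by
  rw [Fintype.sum_eq_single i fun x hx => ?_, Fintype.sum_eq_single j fun y hy => ?_]
  · simp
  · simp [Ne.symm hy]
  · exact Finset.sum_eq_zero fun y _ => by simp [Ne.symm hx]

lemma qhelper_ip_eq_sum (A B : Matrix (Fin d) (Fin d) ℂ) :
    (Aᴴ * B).trace = ∑ i, ∑ j, star (A j i) * B j i := by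
  simp [Matrix.trace, Matrix.mul_apply, Matrix.conjTranspose_apply, Matrix.diag]

lemma qhelper_ip_conj (A B : Matrix (Fin d) (Fin d) ℂ) :
    star ((Aᴴ * B).trace) = (Bᴴ * A).trace := by
  simp only [qhelper_ip_eq_sum, star_sum, star_mul', star_star]
  exact Finset.sum_congr rfl fun i _ => Finset.sum_congr rfl fun j _ => mul_comm _ _

lemma qhelper_entry_eq (A : Matrix (Fin d) (Fin d) ℂ) (i j : Fin d) :
    ((Matrix.single i j (1:ℂ))ᴴ * A).trace = A i j := by
  simp only [qhelper_ip_eq_sum, Matrix.single, Matrix.of_apply]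
  rw [Finset.sum_comm]
  simpa using qhelper_double_ite_sum i j (fun x y => A x y)

lemma qhelper_repr_std (M : Matrix (Fin d) (Fin d) ℂ) (k : Fin d × Fin d) :
    (Matrix.stdBasis ℂ (Fin d) (Fin d)).repr M k = M k.1 k.2 := by
  conv_lhs => rw [matrix_eq_sum_single M]
  have h : ∀ i j, Matrix.single i j (M i j)
      = M i j • Matrix.stdBasis ℂ (Fin d) (Fin d) (i, j) := by
    intro i j
    rw [Matrix.stdBasis_eq_single, smul_single, smul_eq_mul, mul_one]
  simp only [h, map_sum, _root_.map_smul, Module.Basis.repr_self]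
  rcases k with ⟨a, b⟩
  simp only [Finsupp.smul_single, smul_eq_mul, mul_one, Finsupp.coe_finset_sum, Finset.sum_apply,
    Finsupp.single_apply, Prod.mk.injEq, ← ite_and]
  have := qhelper_double_ite_sum a b (fun x y => M x y)
  simp only [eq_comm (b := a), eq_comm (b := b)] at this ⊢
  simpa using this

lemma qhelper_str_eq (f : Matrix (Fin d) (Fin d) ℂ →ₗ[ℂ] Matrix (Fin d) (Fin d) ℂ) :
    LinearMap.trace ℂ _ f
      = ∑ q : Fin d × Fin d, (f (Matrix.single q.1 q.2 (1:ℂ))) q.1 q.2 := by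
  rw [LinearMap.trace_eq_matrix_trace ℂ (Matrix.stdBasis ℂ (Fin d) (Fin d)), Matrix.trace]
  refine Finset.sum_congr rfl fun k _ => ?_
  rw [Matrix.diag_apply, LinearMap.toMatrix_apply, qhelper_repr_std]
  rcases k with ⟨a, b⟩
  rw [Matrix.stdBasis_eq_single]

private lemma qhelper_conj_mul_self (z : ℂ) :
    star z * z = ((‖z‖ : ℝ) : ℂ)^2 := by
  rw [Complex.star_def, mul_comm, Complex.mul_conj, ← Complex.sq_norm]
  push_cast
  ring

lemma qhelper_ip_self (v : Matrix (Fin d) (Fin d) ℂ) :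
    (vᴴ * v).trace = ((∑ i, ∑ j, (‖v j i‖)^2 : ℝ) : ℂ) := by
  rw [qhelper_ip_eq_sum]
  push_cast
  exact Finset.sum_congr rfl fun i _ => Finset.sum_congr rfl fun j _ =>
    qhelper_conj_mul_self (v j i)

lemma qhelper_trace_sq_le (ρ : Matrix (Fin d) (Fin d) ℂ) (hρ : ρ.PosSemidef)
    (h1 : ρ.trace = 1) : ((ρᴴ * ρ).trace).re ≤ 1 := by
  have hH : ρ.IsHermitian := hρ.1
  set U : Matrix (Fin d) (Fin d) ℂ := (hH.eigenvectorUnitary : Matrix (Fin d) (Fin d) ℂ) with hU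
  set D : Matrix (Fin d) (Fin d) ℂ := diagonal (RCLike.ofReal ∘ hH.eigenvalues) with hD
  have hUU : (star U) * U = 1 := Matrix.mem_unitaryGroup_iff'.mp hH.eigenvectorUnitary.2
  have hspec : ρ = U * D * star U := hH.spectral_theorem
  have htr2 : (ρᴴ * ρ).trace = (D * D).trace := by
    conv_lhs => rw [hH.eq, hspec]
    rw [show U * D * star U * (U * D * star U) = U * (D * ((star U * U) * (D * star U))) by
      simp only [mul_assoc], hUU, one_mul]
    rw [Matrix.trace_mul_comm, show D * (D * star U) * U = D * D * (star U * U) by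
      simp only [mul_assoc], hUU, mul_one]
  have htrD : ρ.trace = (D).trace := by
    conv_lhs => rw [hspec]
    rw [show U * D * star U = U * (D * star U) by simp only [mul_assoc],
      Matrix.trace_mul_comm, show D * star U * U = D * (star U * U) by simp only [mul_assoc],
      hUU, mul_one]
  have htr1 : ∑ i, hH.eigenvalues i = 1 := by
    rw [htrD] at h1
    have h2 : (D).trace = ((∑ i, hH.eigenvalues i : ℝ) : ℂ) := by
      simp [hD, Matrix.trace_diagonal]
    rw [h2] at h1
    exact_mod_cast h1
  have htr2' : ((ρᴴ * ρ).trace).re = ∑ i, (hH.eigenvalues i)^2 := by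
    rw [htr2]
    have h3 : D * D = diagonal (fun i => ((hH.eigenvalues i : ℂ))^2) := by
      rw [hD, Matrix.diagonal_mul_diagonal]
      funext i; simp [sq]
    rw [h3, Matrix.trace_diagonal, Complex.re_sum]
    exact Finset.sum_congr rfl fun i _ => by
      rw [← Complex.ofReal_pow, Complex.ofReal_re]
  rw [htr2']
  calc ∑ i, (hH.eigenvalues i)^2 ≤ (∑ i, hH.eigenvalues i)^2 :=
        Finset.sum_sq_le_sq_sum_of_nonneg fun i _ => hρ.eigenvalues_nonneg i
    _ = 1 := by rw [htr1]; norm_num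

end QHelpers

/-- The superoperator `X ↦ Σ_z p_z Tr[ρR_z X] • ρL_z` on `d×d` complex matrices.
With `ρL = ρ^Q, ρR = ρ^C` this is `η^{QC}`; with `ρL = ρR = ρ^C` it is `η^{CC}`. -/
noncomputable def etaMap {Z : Type*} [Fintype Z] {d : ℕ} (p : Z → ℝ)
    (ρL ρR : Z → Matrix (Fin d) (Fin d) ℂ) :
    Matrix (Fin d) (Fin d) ℂ →ₗ[ℂ] Matrix (Fin d) (Fin d) ℂ :=
  ∑ z, (p z : ℂ) •
    LinearMap.smulRight
      (Matrix.traceLinearMap (Fin d) ℂ ℂ ∘ₗ LinearMap.mulLeft ℂ (ρR z)) (ρL z)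

/-- **Upper bound for convex quadratic ensemble averages (Eq. (32) of the paper).** For
any positive semidefinite self-adjoint superoperator 𝒩,
`Σ_z p_z ⟨ρ^Q_z, 𝒩(ρ^Q_z)⟩ ≤ ‖𝒩‖_∞ (1 − STr[η^{QC} ∘ ζ]) + STr[𝒩 ∘ η^{QC} ∘ ζ]`,
where ζ solves `η^{CC} ∘ ζ = (η^{QC})†` and `‖𝒩‖_∞ = sup_{⟨X,X⟩=1} |⟨X, 𝒩(X)⟩|`. -/
theorem quadratic_average_le_superoperator_trace
    {Z : Type*} [Fintype Z] {d : ℕ}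
    (p : Z → ℝ) (hp : ∀ z, 0 ≤ p z) (hp1 : ∑ z, p z = 1)
    (ρQ ρC : Z → Matrix (Fin d) (Fin d) ℂ)
    (hρQ : ∀ z, (ρQ z).PosSemidef ∧ (ρQ z).trace = 1)
    (hρC : ∀ z, (ρC z).PosSemidef ∧ (ρC z).trace = 1)
    (ζ : Matrix (Fin d) (Fin d) ℂ →ₗ[ℂ] Matrix (Fin d) (Fin d) ℂ)
    (hζ : ∀ A B : Matrix (Fin d) (Fin d) ℂ,
      (((etaMap p ρC ρC) (ζ A))ᴴ * B).trace = (Aᴴ * (etaMap p ρQ ρC) B).trace)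
    (N : Matrix (Fin d) (Fin d) ℂ →ₗ[ℂ] Matrix (Fin d) (Fin d) ℂ)
    (hNsa : ∀ A B : Matrix (Fin d) (Fin d) ℂ, ((N A)ᴴ * B).trace = (Aᴴ * N B).trace)
    (hNpos : ∀ X : Matrix (Fin d) (Fin d) ℂ, 0 ≤ ((Xᴴ * N X).trace).re)
    (Nnorm : ℝ)
    (hNnorm : Nnorm = sSup {r : ℝ | ∃ X : Matrix (Fin d) (Fin d) ℂ,
        (Xᴴ * X).trace = 1 ∧ r = |((Xᴴ * N X).trace).re|}) :
    ∑ z, p z * (((ρQ z)ᴴ * N (ρQ z)).trace).re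
      ≤ Nnorm * (1 - (LinearMap.trace ℂ (Matrix (Fin d) (Fin d) ℂ)
            ((etaMap p ρQ ρC) ∘ₗ ζ)).re)
        + (LinearMap.trace ℂ (Matrix (Fin d) (Fin d) ℂ)
            (N ∘ₗ (etaMap p ρQ ρC) ∘ₗ ζ)).re := by
  classical
  -- the adjoint images s z = ζ†(ρC z)
  set s : Z → Matrix (Fin d) (Fin d) ℂ :=
    fun z => Matrix.of fun i j => star ((ρC z * ζ (Matrix.single i j 1)).trace) with hsdef
  have hstd : ∀ (w : Matrix (Fin d) (Fin d) ℂ) i j,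
      Matrix.single i j (w i j) = w i j • Matrix.single i j (1:ℂ) := fun w i j => by
    rw [smul_single, smul_eq_mul, mul_one]
  -- linearity expansion
  have step : ∀ (M : Matrix (Fin d) (Fin d) ℂ →ₗ[ℂ] Matrix (Fin d) (Fin d) ℂ)
      (v w : Matrix (Fin d) (Fin d) ℂ),
      (vᴴ * M w).trace
        = ∑ q : Fin d × Fin d, (vᴴ * M (Matrix.single q.1 q.2 (1:ℂ))).trace * w q.1 q.2 := by
    intro M v w
    conv_lhs => rw [matrix_eq_sum_single w]
    rw [← Fintype.sum_prod_type']
    simp only [map_sum]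
    rw [Matrix.mul_sum, Matrix.trace_sum]
    refine Finset.sum_congr rfl fun q _ => ?_
    rw [hstd, _root_.map_smul, Matrix.mul_smul, Matrix.trace_smul, smul_eq_mul, mul_comm]
  -- Riesz property of s
  have hs : ∀ z (X : Matrix (Fin d) (Fin d) ℂ),
      (ρC z * ζ X).trace = ((s z)ᴴ * X).trace := by
    intro z X
    have lhs_eq : (ρC z * ζ X).trace
        = ∑ i, ∑ j, (ρC z * ζ (Matrix.single i j (1:ℂ))).trace * X i j := by
      conv_lhs => rw [matrix_eq_sum_single X]
      simp only [map_sum]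
      rw [Matrix.mul_sum, Matrix.trace_sum]
      refine Finset.sum_congr rfl fun i _ => ?_
      rw [Matrix.mul_sum, Matrix.trace_sum]
      refine Finset.sum_congr rfl fun j _ => ?_
      rw [hstd, _root_.map_smul, Matrix.mul_smul, Matrix.trace_smul, smul_eq_mul, mul_comm]
    calc (ρC z * ζ X).trace
        = ∑ i, ∑ j, (ρC z * ζ (Matrix.single i j (1:ℂ))).trace * X i j := lhs_eq
      _ = ∑ i, ∑ j, star (s z i j) * X i j := by
          refine Finset.sum_congr rfl fun i _ => Finset.sum_congr rfl fun j _ => ?_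
          simp only [hsdef, Matrix.of_apply, star_star]
      _ = ((s z)ᴴ * X).trace := by
          rw [qhelper_ip_eq_sum]
          exact Finset.sum_comm
  -- unfolding etaMap
  have heta : ∀ (ρL : Z → Matrix (Fin d) (Fin d) ℂ) (X : Matrix (Fin d) (Fin d) ℂ),
      etaMap p ρL ρC X = ∑ z, ((p z : ℂ) * (ρC z * X).trace) • ρL z := by
    intro ρL X
    simp only [etaMap, LinearMap.sum_apply, LinearMap.smul_apply, LinearMap.smulRight_apply,
      LinearMap.coe_comp, Function.comp_apply, Matrix.traceLinearMap_apply,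
      LinearMap.mulLeft_apply, smul_smul]
  have hetaζ : ∀ (ρL : Z → Matrix (Fin d) (Fin d) ℂ) (X : Matrix (Fin d) (Fin d) ℂ),
      etaMap p ρL ρC (ζ X) = ∑ z, ((p z : ℂ) * ((s z)ᴴ * X).trace) • ρL z := by
    intro ρL X
    rw [heta]
    exact Finset.sum_congr rfl fun z _ => by rw [hs]
  -- self-adjointness of etaMap p ρC ρC
  have hCC : ∀ A B : Matrix (Fin d) (Fin d) ℂ,
      ((etaMap p ρC ρC A)ᴴ * B).trace = (Aᴴ * etaMap p ρC ρC B).trace := by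
    intro A B
    rw [heta, heta, Matrix.conjTranspose_sum]
    simp only [Matrix.conjTranspose_smul, Matrix.sum_mul, Matrix.smul_mul, Matrix.mul_sum,
      Matrix.mul_smul, Matrix.trace_sum, Matrix.trace_smul, smul_eq_mul]
    refine Finset.sum_congr rfl fun z _ => ?_
    have h1 : star ((p z : ℂ) * (ρC z * A).trace) = (p z : ℂ) * (Aᴴ * ρC z).trace := by
      rw [star_mul']
      rw [show (ρC z * A).trace = ((ρC z)ᴴ * A).trace by rw [((hρC z).1).1.eq]]
      rw [qhelper_ip_conj]
      rw [show star ((p z : ℂ)) = ((p z : ℝ) : ℂ) from Complex.conj_ofReal _]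
    rw [h1, ((hρC z).1).1.eq]
    ring
  -- the two representations of T = etaMap p ρQ ρC ∘ ζ
  have hA : ∀ X : Matrix (Fin d) (Fin d) ℂ,
      etaMap p ρQ ρC (ζ X) = ∑ z, ((p z : ℂ) * ((s z)ᴴ * X).trace) • ρQ z := hetaζ ρQ
  have key : ∀ A X : Matrix (Fin d) (Fin d) ℂ,
      (Aᴴ * etaMap p ρQ ρC (ζ X)).trace
        = ∑ z, ((p z : ℂ) * ((s z)ᴴ * X).trace) * (Aᴴ * s z).trace := by
    intro A X
    rw [← hζ A (ζ X), hCC (ζ A) (ζ X), hetaζ ρC X]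
    rw [Matrix.mul_sum, Matrix.trace_sum]
    refine Finset.sum_congr rfl fun z _ => ?_
    rw [Matrix.mul_smul, Matrix.trace_smul, smul_eq_mul]
    congr 1
    rw [← qhelper_ip_conj (ρC z) (ζ A), ((hρC z).1).1.eq, hs, qhelper_ip_conj]
  have hB : ∀ X : Matrix (Fin d) (Fin d) ℂ,
      etaMap p ρQ ρC (ζ X) = ∑ z, ((p z : ℂ) * ((s z)ᴴ * X).trace) • s z := by
    intro X
    refine Matrix.ext fun a b => ?_
    rw [Matrix.sum_apply]
    simp only [Matrix.smul_apply, smul_eq_mul]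
    rw [← qhelper_entry_eq (etaMap p ρQ ρC (ζ X)) a b, key]
    exact Finset.sum_congr rfl fun z _ => by rw [qhelper_entry_eq]
  -- entrywise identity
  have hC : ∀ (Y : Matrix (Fin d) (Fin d) ℂ) (a b : Fin d),
      ∑ z, ((p z : ℂ) * ((s z)ᴴ * Y).trace) * (ρQ z a b)
        = ∑ z, ((p z : ℂ) * ((s z)ᴴ * Y).trace) * (s z a b) := by
    intro Y a b
    have h := congrArg (fun (M : Matrix (Fin d) (Fin d) ℂ) => M a b) ((hA Y).symm.trans (hB Y))
    simpa [Matrix.sum_apply, Matrix.smul_apply, smul_eq_mul] using h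
  -- the crucial cross identity, for an arbitrary superoperator M
  have cross : ∀ (M : Matrix (Fin d) (Fin d) ℂ →ₗ[ℂ] Matrix (Fin d) (Fin d) ℂ),
      ∑ z, ((p z : ℂ) * ((s z)ᴴ * M (ρQ z)).trace)
        = ∑ z, ((p z : ℂ) * ((s z)ᴴ * M (s z)).trace) := by
    intro M
    have e1 : ∀ f : Z → Matrix (Fin d) (Fin d) ℂ,
        ∑ z, ((p z : ℂ) * ((s z)ᴴ * M (f z)).trace)
          = ∑ q : Fin d × Fin d, ∑ z,
              ((p z : ℂ) * ((s z)ᴴ * M (Matrix.single q.1 q.2 (1:ℂ))).trace)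
                * f z q.1 q.2 := by
      intro f
      rw [Finset.sum_comm]
      refine Finset.sum_congr rfl fun z _ => ?_
      rw [step M (s z) (f z), Finset.mul_sum]
      exact Finset.sum_congr rfl fun q _ => by ring
    rw [e1 ρQ, e1 s]
    exact Finset.sum_congr rfl fun q _ => hC (M (Matrix.single q.1 q.2 (1:ℂ))) q.1 q.2
  -- identity-map version of step
  have step0 : ∀ (v w : Matrix (Fin d) (Fin d) ℂ),
      (vᴴ * w).trace
        = ∑ q : Fin d × Fin d, (vᴴ * Matrix.single q.1 q.2 (1:ℂ)).trace * w q.1 q.2 := by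
    intro v w
    simpa using step LinearMap.id v w
  -- superoperator traces
  have hstr1 : LinearMap.trace ℂ (Matrix (Fin d) (Fin d) ℂ) ((etaMap p ρQ ρC) ∘ₗ ζ)
      = ∑ z, (p z : ℂ) * ((s z)ᴴ * s z).trace := by
    rw [qhelper_str_eq]
    simp only [LinearMap.coe_comp, Function.comp_apply]
    simp only [hB, Matrix.sum_apply, Matrix.smul_apply, smul_eq_mul]
    rw [Finset.sum_comm]
    refine Finset.sum_congr rfl fun z _ => ?_
    rw [step0 (s z) (s z), Finset.mul_sum]
    exact Finset.sum_congr rfl fun q _ => by ring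
  have hstr2 : LinearMap.trace ℂ (Matrix (Fin d) (Fin d) ℂ) (N ∘ₗ (etaMap p ρQ ρC) ∘ₗ ζ)
      = ∑ z, (p z : ℂ) * ((s z)ᴴ * N (s z)).trace := by
    rw [qhelper_str_eq]
    simp only [LinearMap.coe_comp, Function.comp_apply]
    simp only [hB, map_sum, _root_.map_smul, Matrix.sum_apply, Matrix.smul_apply, smul_eq_mul]
    rw [Finset.sum_comm]
    refine Finset.sum_congr rfl fun z _ => ?_
    rw [step0 (s z) (N (s z)), Finset.mul_sum]
    exact Finset.sum_congr rfl fun q _ => by ring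
  -- real quantities
  set E : ℝ := ∑ z, p z * (((ρQ z)ᴴ * N (ρQ z)).trace).re with hE
  set Yr : ℝ := ∑ z, p z * (((s z)ᴴ * N (s z)).trace).re with hYr
  set W : ℝ := ∑ z, p z * (((s z)ᴴ * s z).trace).re with hW
  set Q : ℝ := ∑ z, p z * (((ρQ z)ᴴ * ρQ z).trace).re with hQ
  have hre_sum : ∀ f : Z → ℂ, (∑ z, (p z : ℂ) * f z).re = ∑ z, p z * (f z).re := by
    intro f
    rw [Complex.re_sum]
    exact Finset.sum_congr rfl fun z _ => Complex.re_ofReal_mul _ _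
  have hre1 : (LinearMap.trace ℂ (Matrix (Fin d) (Fin d) ℂ)
      ((etaMap p ρQ ρC) ∘ₗ ζ)).re = W := by
    rw [hstr1, hre_sum]
  have hre2 : (LinearMap.trace ℂ (Matrix (Fin d) (Fin d) ℂ)
      (N ∘ₗ (etaMap p ρQ ρC) ∘ₗ ζ)).re = Yr := by
    rw [hstr2, hre_sum]
  -- real cross identities
  have crossN_re : ∑ z, p z * (((s z)ᴴ * N (ρQ z)).trace).re = Yr := by
    rw [hYr, ← hre_sum, ← hre_sum, cross N]
  have crossI_re : ∑ z, p z * (((s z)ᴴ * ρQ z).trace).re = W := by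
    have h := cross LinearMap.id
    simp only [LinearMap.id_coe, id_eq] at h
    rw [hW, ← hre_sum, ← hre_sum, h]
  -- conjugate-symmetry of the mixed terms
  have claim2 : ∀ (M : Matrix (Fin d) (Fin d) ℂ →ₗ[ℂ] Matrix (Fin d) (Fin d) ℂ),
      (∀ A B : Matrix (Fin d) (Fin d) ℂ, ((M A)ᴴ * B).trace = (Aᴴ * M B).trace) →
      ∀ z, (((ρQ z)ᴴ * M (s z)).trace).re = (((s z)ᴴ * M (ρQ z)).trace).re := by
    intro M hM z
    have h : ((ρQ z)ᴴ * M (s z)).trace = star (((s z)ᴴ * M (ρQ z)).trace) := by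
      rw [← hM (s z) (ρQ z), qhelper_ip_conj]
    rw [h, Complex.star_def, Complex.conj_re]
  -- expansions of the quadratic form at v z = ρQ z - s z
  have expand : ∀ (M : Matrix (Fin d) (Fin d) ℂ →ₗ[ℂ] Matrix (Fin d) (Fin d) ℂ),
      (∀ A B : Matrix (Fin d) (Fin d) ℂ, ((M A)ᴴ * B).trace = (Aᴴ * M B).trace) →
      ∀ z, (((ρQ z - s z)ᴴ * M (ρQ z - s z)).trace).re
        = (((ρQ z)ᴴ * M (ρQ z)).trace).re - 2 * (((s z)ᴴ * M (ρQ z)).trace).re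
          + (((s z)ᴴ * M (s z)).trace).re := by
    intro M hM z
    have h2 := claim2 M hM z
    rw [Matrix.conjTranspose_sub, map_sub, Matrix.sub_mul, Matrix.mul_sub, Matrix.mul_sub,
      Matrix.trace_sub, Matrix.trace_sub, Matrix.trace_sub]
    simp only [Complex.sub_re]
    linarith [h2]
  -- nonnegativity of Nnorm
  have hNnorm_nonneg : 0 ≤ Nnorm := by
    rw [hNnorm]
    refine Real.sSup_nonneg ?_
    rintro r ⟨X, -, rfl⟩
    exact abs_nonneg _
  -- the sup-based bound
  have hbound : ∀ v : Matrix (Fin d) (Fin d) ℂ,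
      ((vᴴ * N v).trace).re ≤ Nnorm * ((vᴴ * v).trace).re := by
    intro v
    have hSbdd : BddAbove {r : ℝ | ∃ X : Matrix (Fin d) (Fin d) ℂ,
        (Xᴴ * X).trace = 1 ∧ r = |((Xᴴ * N X).trace).re|} := by
      refine ⟨∑ q : Fin d × Fin d, ∑ r : Fin d × Fin d,
        ‖(N (Matrix.single q.1 q.2 (1:ℂ))) r.1 r.2‖, ?_⟩
      rintro r ⟨X, hX1, rfl⟩
      have h2 : (∑ i, ∑ j, (‖X j i‖)^2 : ℝ) = 1 := by
        have h := hX1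
        rw [qhelper_ip_self] at h
        exact_mod_cast h
      have habs1 : ∀ a b, ‖X a b‖ ≤ 1 := by
        intro a b
        have hle : (‖X a b‖)^2 ≤ 1 := by
          rw [← h2]
          calc (‖X a b‖)^2
              ≤ ∑ j, (‖X j b‖)^2 :=
                Finset.single_le_sum (f := fun j => (‖X j b‖)^2)
                  (fun j _ => sq_nonneg _) (Finset.mem_univ a)
            _ ≤ ∑ i, ∑ j, (‖X j i‖)^2 :=
                Finset.single_le_sum (f := fun i => ∑ j, (‖X j i‖)^2)
                  (fun i _ => Finset.sum_nonneg fun j _ => sq_nonneg _) (Finset.mem_univ b)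
        nlinarith [norm_nonneg (X a b)]
      have hterm : ∀ q : Fin d × Fin d,
          ‖(Xᴴ * N (Matrix.single q.1 q.2 (1:ℂ))).trace‖
            ≤ ∑ r : Fin d × Fin d,
                ‖(N (Matrix.single q.1 q.2 (1:ℂ))) r.1 r.2‖ := by
        intro q
        rw [qhelper_ip_eq_sum, ← Fintype.sum_prod_type']
        refine le_trans (norm_sum_le _ _) ?_
        rw [show (Finset.univ : Finset (Fin d × Fin d)).sum
            (fun r => ‖(N (Matrix.single q.1 q.2 (1:ℂ))) r.1 r.2‖)
          = ∑ r : Fin d × Fin d,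
              ‖(N (Matrix.single q.1 q.2 (1:ℂ))) r.1 r.2‖ from rfl]
        have hswap : ∑ r : Fin d × Fin d,
            ‖(N (Matrix.single q.1 q.2 (1:ℂ))) r.1 r.2‖
          = ∑ r : Fin d × Fin d,
              ‖(N (Matrix.single q.1 q.2 (1:ℂ))) r.2 r.1‖ :=
          Fintype.sum_equiv (Equiv.prodComm _ _) _ _ (fun r => rfl)
        rw [hswap]
        refine Finset.sum_le_sum fun r _ => ?_
        rw [norm_mul]
        calc ‖star (X r.2 r.1)‖
              * ‖(N (Matrix.single q.1 q.2 1)) r.2 r.1‖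
            ≤ 1 * ‖(N (Matrix.single q.1 q.2 1)) r.2 r.1‖ := by
              refine mul_le_mul_of_nonneg_right ?_ (norm_nonneg _)
              rw [show star (X r.2 r.1) = (starRingEnd ℂ) (X r.2 r.1) from rfl,
                Complex.norm_conj]
              exact habs1 _ _
          _ = _ := one_mul _
      calc |((Xᴴ * N X).trace).re|
          ≤ ‖(Xᴴ * N X).trace‖ := Complex.abs_re_le_norm _
        _ ≤ ∑ q : Fin d × Fin d,
              ‖(Xᴴ * N (Matrix.single q.1 q.2 (1:ℂ))).trace * X q.1 q.2‖ := by
            rw [step N X X]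
            exact norm_sum_le _ _
        _ ≤ ∑ q : Fin d × Fin d, ∑ r : Fin d × Fin d,
              ‖(N (Matrix.single q.1 q.2 (1:ℂ))) r.1 r.2‖ := by
            refine Finset.sum_le_sum fun q _ => ?_
            rw [norm_mul]
            calc ‖(Xᴴ * N (Matrix.single q.1 q.2 (1:ℂ))).trace‖
                  * ‖X q.1 q.2‖
                ≤ ‖(Xᴴ * N (Matrix.single q.1 q.2 (1:ℂ))).trace‖ * 1 :=
                  mul_le_mul_of_nonneg_left (habs1 _ _) (norm_nonneg _)
              _ = ‖(Xᴴ * N (Matrix.single q.1 q.2 (1:ℂ))).trace‖ := mul_one _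
              _ ≤ _ := hterm q
    have ht0 : 0 ≤ ((vᴴ * v).trace).re := by
      rw [qhelper_ip_self, Complex.ofReal_re]
      exact Finset.sum_nonneg fun i _ => Finset.sum_nonneg fun j _ => sq_nonneg _
    rcases ht0.lt_or_eq with hpos | heq
    · -- positive case
      set t : ℝ := ((vᴴ * v).trace).re with htdef
      have hts : t = (∑ i, ∑ j, (‖v j i‖)^2 : ℝ) := by
        rw [htdef, qhelper_ip_self, Complex.ofReal_re]
      have hvv : (vᴴ * v).trace = (t : ℂ) := by rw [qhelper_ip_self, hts]
      set u : ℝ := Real.sqrt t with hudef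
      have hu : 0 < u := Real.sqrt_pos.mpr hpos
      have huu : u * u = t := Real.mul_self_sqrt (le_of_lt hpos)
      set X : Matrix (Fin d) (Fin d) ℂ := ((u⁻¹ : ℝ) : ℂ) • v with hXdef
      have hXX : (Xᴴ * X).trace = 1 := by
        rw [hXdef, Matrix.conjTranspose_smul, Matrix.smul_mul, Matrix.mul_smul, smul_smul,
          Matrix.trace_smul, hvv, Complex.star_def, Complex.conj_ofReal, smul_eq_mul]
        rw [← Complex.ofReal_mul, ← Complex.ofReal_mul, ← Complex.ofReal_one]
        congr 1
        field_simp
        nlinarith [huu]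
      have hXNX : ((Xᴴ * N X).trace).re = u⁻¹ * u⁻¹ * ((vᴴ * N v).trace).re := by
        rw [hXdef, Matrix.conjTranspose_smul, _root_.map_smul, Matrix.smul_mul, Matrix.mul_smul,
          smul_smul, Matrix.trace_smul, Complex.star_def, Complex.conj_ofReal, smul_eq_mul,
          ← Complex.ofReal_mul, Complex.re_ofReal_mul]
      have hmem : |((Xᴴ * N X).trace).re| ∈ {r : ℝ | ∃ X : Matrix (Fin d) (Fin d) ℂ,
          (Xᴴ * X).trace = 1 ∧ r = |((Xᴴ * N X).trace).re|} := ⟨X, hXX, rfl⟩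
      have hle : |((Xᴴ * N X).trace).re| ≤ Nnorm := by
        rw [hNnorm]
        exact le_csSup hSbdd hmem
      rw [abs_of_nonneg (hNpos X), hXNX] at hle
      calc ((vᴴ * N v).trace).re
          = (u * u) * (u⁻¹ * u⁻¹ * ((vᴴ * N v).trace).re) := by
            field_simp
        _ ≤ (u * u) * Nnorm := by
            refine mul_le_mul_of_nonneg_left hle ?_
            positivity
        _ = Nnorm * t := by rw [huu]; ring
    · -- v = 0 case
      have hsum0 : (∑ i, ∑ j, (‖v j i‖)^2 : ℝ) = 0 := by
        have h := heq.symm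
        rw [qhelper_ip_self, Complex.ofReal_re] at h
        exact h
      have hv : v = 0 := by
        refine Matrix.ext fun a b => ?_
        have h1 := (Finset.sum_eq_zero_iff_of_nonneg
          (fun i _ => Finset.sum_nonneg fun j _ => sq_nonneg (‖v j i‖))).mp hsum0
          b (Finset.mem_univ b)
        have h2 := (Finset.sum_eq_zero_iff_of_nonneg
          (fun j _ => sq_nonneg (‖v j b‖))).mp h1 a (Finset.mem_univ a)
        have h3 : ‖v a b‖ = 0 := by nlinarith [norm_nonneg (v a b)]
        simpa using norm_eq_zero.mp h3
      rw [hv]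
      simp
  -- expansion identities for the sums
  have hEY : E - Yr = ∑ z, p z * (((ρQ z - s z)ᴴ * N (ρQ z - s z)).trace).re := by
    have h1 : ∀ z, p z * (((ρQ z - s z)ᴴ * N (ρQ z - s z)).trace).re
        = p z * (((ρQ z)ᴴ * N (ρQ z)).trace).re
          - 2 * (p z * (((s z)ᴴ * N (ρQ z)).trace).re)
          + p z * (((s z)ᴴ * N (s z)).trace).re := fun z => by
      rw [expand N hNsa z]; ring
    rw [Finset.sum_congr rfl fun z _ => h1 z, Finset.sum_add_distrib, Finset.sum_sub_distrib,
      ← Finset.mul_sum, crossN_re, hE, hYr]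
    ring
  have hQW : Q - W = ∑ z, p z * (((ρQ z - s z)ᴴ * (ρQ z - s z)).trace).re := by
    have hid : ∀ z, (((ρQ z - s z)ᴴ * (ρQ z - s z)).trace).re
        = (((ρQ z)ᴴ * ρQ z).trace).re - 2 * (((s z)ᴴ * ρQ z).trace).re
          + (((s z)ᴴ * s z).trace).re := by
      intro z
      have h := expand LinearMap.id (fun A B => rfl) z
      simp only [LinearMap.id_coe, id_eq] at h
      exact h
    have h1 : ∀ z, p z * (((ρQ z - s z)ᴴ * (ρQ z - s z)).trace).re
        = p z * (((ρQ z)ᴴ * ρQ z).trace).re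
          - 2 * (p z * (((s z)ᴴ * ρQ z).trace).re)
          + p z * (((s z)ᴴ * s z).trace).re := fun z => by
      rw [hid z]; ring
    rw [Finset.sum_congr rfl fun z _ => h1 z, Finset.sum_add_distrib, Finset.sum_sub_distrib,
      ← Finset.mul_sum, crossI_re, hQ, hW]
    ring
  have hQle : Q ≤ 1 := by
    rw [hQ]
    calc ∑ z, p z * (((ρQ z)ᴴ * ρQ z).trace).re
        ≤ ∑ z, p z * 1 := Finset.sum_le_sum fun z _ =>
          mul_le_mul_of_nonneg_left (qhelper_trace_sq_le _ (hρQ z).1 (hρQ z).2) (hp z)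
      _ = 1 := by simp [hp1]
  -- main chain
  have hstep : E - Yr ≤ Nnorm * (Q - W) := by
    rw [hEY, hQW, Finset.mul_sum]
    refine Finset.sum_le_sum fun z _ => ?_
    calc p z * (((ρQ z - s z)ᴴ * N (ρQ z - s z)).trace).re
        ≤ p z * (Nnorm * (((ρQ z - s z)ᴴ * (ρQ z - s z)).trace).re) :=
          mul_le_mul_of_nonneg_left (hbound (ρQ z - s z)) (hp z)
      _ = Nnorm * (p z * (((ρQ z - s z)ᴴ * (ρQ z - s z)).trace).re) := by ring
  have hfinal : E ≤ Nnorm * (1 - W) + Yr := by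
    have h := mul_le_mul_of_nonneg_left (show Q - W ≤ 1 - W by linarith) hNnorm_nonneg
    linarith
  rw [hre1, hre2]
  exact hfinal
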